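/- arXiv:2312.03956 — 2 statements merged into one kernel-verified Lean document; each statement's English description precedes it below -/
import Mathlib

section
/- Let w be a segmented Smirnov word of length n with k ascents and l descents whose maximal letter is at most m and with no singleton block equal to m. The q-enumerator, with respect to sminv, over all words obtained from w by inserting s new singleton blocks each containing the letter m, equals [n−k−l+s choose s]_q · q^{sminv(w)}. -/
/-- A word `w` together with a set `B` of block-start positions is a segmented
Smirnov word: block starts are valid positions, position `0` starts a block,
letters are positive, and two adjacent letters inside a common block differ. -/
def IsSSW (w : List ℕ) (B : Finset ℕ) : Prop :=
  (∀ b ∈ B, b < w.length) ∧ (w ≠ [] → 0 ∈ B) ∧ (∀ x ∈ w, 0 < x) ∧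
  (∀ i, i + 1 < w.length → (i + 1) ∉ B → w.getD i 0 ≠ w.getD (i + 1) 0)

def AscentAt (w : List ℕ) (B : Finset ℕ) (i : ℕ) : Prop :=
  i + 1 < w.length ∧ (i + 1) ∉ B ∧ w.getD i 0 < w.getD (i + 1) 0

def DescentAt (w : List ℕ) (B : Finset ℕ) (i : ℕ) : Prop :=
  i + 1 < w.length ∧ (i + 1) ∉ B ∧ w.getD (i + 1) 0 < w.getD i 0

noncomputable def numAsc (w : List ℕ) (B : Finset ℕ) : ℕ := Set.ncard {i | AscentAt w B i}

noncomputable def numDesc (w : List ℕ) (B : Finset ℕ) : ℕ := Set.ncard {i | DescentAt w B i}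

/-- `(i,j)` is a sminversion of the segmented word `(w, B)`. -/
def Sminversion (w : List ℕ) (B : Finset ℕ) (i j : ℕ) : Prop :=
  i < j ∧ j < w.length ∧ w.getD j 0 < w.getD i 0 ∧
    (j ∈ B ∨ w.getD i 0 < w.getD (j - 1) 0 ∨
     (i + 1 ≠ j ∧ w.getD (j - 1) 0 = w.getD i 0 ∧ (j - 1) ∈ B) ∨
     (i + 1 ≠ j ∧ 2 ≤ j ∧ w.getD (j - 1) 0 < w.getD (j - 2) 0 ∧
       w.getD (j - 1) 0 = w.getD i 0))

noncomputable def sminv (w : List ℕ) (B : Finset ℕ) : ℕ :=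
  Set.ncard {p : ℕ × ℕ | Sminversion w B p.1 p.2}

/-- The q-analogue `[m]_q = 1 + q + ⋯ + q^{m-1}` as a polynomial. -/
noncomputable def qInt (m : ℕ) : Polynomial ℕ := ∑ i ∈ Finset.range m, Polynomial.X ^ i

/-- The Gaussian binomial coefficient, via the q-Pascal recurrence. -/
noncomputable def qbinom : ℕ → ℕ → Polynomial ℕ
  | _, 0 => 1
  | 0, _ + 1 => 0
  | n + 1, k + 1 => qbinom n k + Polynomial.X ^ (k + 1) * qbinom n (k + 1)

/-- Insert `c i` copies of the letter `m` immediately before each (original)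
position `i`; the first argument is the index of the head of the list. -/
def multiInsertCnt (m : ℕ) (c : ℕ → ℕ) : ℕ → List ℕ → List ℕ
  | i, [] => List.replicate (c i) m
  | i, x :: xs => List.replicate (c i) m ++ x :: multiInsertCnt m c (i + 1) xs

/-- Total number of insertions strictly before position `p`. -/
def csum (c : ℕ → ℕ) (p : ℕ) : ℕ := ∑ q ∈ Finset.range p, c q

/-- The new block starts after inserting, for each gap `p`, `c p` singleton
blocks `{m}`: old starts are shifted, and every inserted letter is a start. -/
def singletonBreaks (c : ℕ → ℕ) (w : List ℕ) (B : Finset ℕ) : Finset ℕ :=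
  (B.image fun b => b + csum c (b + 1)) ∪
    (insert w.length B).biUnion fun p =>
      (Finset.range (c p)).image fun t => p + csum c p + t


def phiF (c : ℕ → ℕ) (i : ℕ) : ℕ := i + csum c (i + 1)
def psiF (c : ℕ → ℕ) (p t : ℕ) : ℕ := p + csum c p + t

open Finset Polynomial List


lemma qbinom_zero (n : ℕ) : qbinom n 0 = 1 := by cases n <;> rfl

lemma qbinom_succ (n k : ℕ) :
    qbinom (n+1) (k+1) = qbinom n k + Polynomial.X ^ (k + 1) * qbinom n (k + 1) := rfl

lemma qbinom_of_lt {n k : ℕ} (h : n < k) : qbinom n k = 0 := by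
  induction n generalizing k with
  | zero => cases k with
    | zero => omega
    | succ k => rfl
  | succ n ih =>
    cases k with
    | zero => omega
    | succ k =>
      rw [qbinom_succ, ih (by omega), ih (by omega)]
      ring

lemma qbinom_self (n : ℕ) : qbinom n n = 1 := by
  induction n with
  | zero => rfl
  | succ n ih => rw [qbinom_succ, ih, qbinom_of_lt (by omega)]; ring

lemma qbinom_one_succ (n : ℕ) : qbinom (n+1) 1 = qbinom n 1 + Polynomial.X ^ n := by
  induction n with
  | zero => simp [qbinom_succ, qbinom_zero, qbinom_of_lt]
  | succ n ih =>
    conv_lhs => rw [qbinom_succ, ih]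
    conv_rhs => rw [qbinom_succ, qbinom_zero]
    rw [qbinom_zero]
    ring

lemma qbinom_pascal' (n k : ℕ) (hk : k ≤ n) :
    qbinom (n+1) (k+1) = qbinom n (k+1) + Polynomial.X ^ (n-k) * qbinom n k := by
  induction n generalizing k with
  | zero =>
    interval_cases k
    simp [qbinom_self, qbinom_of_lt]
  | succ n ih =>
    cases k with
    | zero =>
      simpa [qbinom_zero] using qbinom_one_succ (n+1)
    | succ k =>
      rcases Nat.lt_or_ge k n with hkn | hkn
      · have h1 := ih k (by omega)
        have h2 := ih (k+1) (by omega)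
        conv_lhs => rw [qbinom_succ, h1, h2]
        conv_rhs => rw [qbinom_succ n (k+1), qbinom_succ n k]
        have e0 : n - k = (n - (k+1)) + 1 := by omega
        have e1 : n + 1 - (k + 1) = (n - (k+1)) + 1 := by omega
        rw [e0, e1]
        ring
      · have hk' : k = n := by omega
        subst hk'
        rw [qbinom_self, qbinom_of_lt (by omega), Nat.sub_self]
        simp [qbinom_self]

lemma sym_range_sum (N : ℕ) : ∀ s : ℕ,
    ∑ M ∈ (Finset.range (N+1)).sym s, (Polynomial.X : Polynomial ℕ) ^ (M : Multiset ℕ).sum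
      = qbinom (N + s) s := by
  induction N with
  | zero =>
    intro s
    have h1 : (Finset.range 1).sym s = {Sym.replicate s 0} := by
      ext M
      simp only [Finset.mem_sym_iff, Finset.mem_range, Nat.lt_one_iff, Finset.mem_singleton]
      rw [← Sym.eq_replicate]
    rw [h1, Finset.sum_singleton]
    have h2 : ((Sym.replicate s 0 : Sym ℕ s) : Multiset ℕ).sum = 0 := by
      rw [Sym.coe_replicate, Multiset.sum_replicate, smul_eq_mul, Nat.mul_zero]
    rw [h2, pow_zero, Nat.zero_add, qbinom_self]
  | succ N ihN =>
    intro s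
    induction s with
    | zero => simp [qbinom_zero, show ((∅ : Sym ℕ 0) : Multiset ℕ) = 0 from rfl]
    | succ s ihs =>
      classical
      have hsplit : (Finset.range (N+2)).sym (s+1)
          = ((Finset.range (N+2)).sym (s+1)).filter (fun M => N+1 ∈ M)
            ∪ ((Finset.range (N+2)).sym (s+1)).filter (fun M => N+1 ∉ M) := by
        rw [Finset.filter_union_filter_not_eq]
      have hdisj : Disjoint (((Finset.range (N+2)).sym (s+1)).filter (fun M => N+1 ∈ M))
          (((Finset.range (N+2)).sym (s+1)).filter (fun M => N+1 ∉ M)) :=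
        Finset.disjoint_filter_filter_not _ _ _
      rw [hsplit, Finset.sum_union hdisj]
      have hA : ((Finset.range (N+2)).sym (s+1)).filter (fun M => N+1 ∈ M)
          = ((Finset.range (N+2)).sym s).image (Sym.cons (N+1)) := by
        ext M
        simp only [Finset.mem_filter, Finset.mem_sym_iff, Finset.mem_image, Finset.mem_range]
        constructor
        · rintro ⟨hall, hmem⟩
          refine ⟨M.erase (N+1) hmem, fun a ha => hall a ?_, Sym.cons_erase hmem⟩
          have : (M.erase (N+1) hmem : Multiset ℕ) = Multiset.erase M (N+1) :=
            Sym.coe_erase hmem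
          have ha' : a ∈ Multiset.erase (M : Multiset ℕ) (N+1) := by
            rwa [← this]
          exact Multiset.mem_of_mem_erase ha'
        · rintro ⟨M', hM', rfl⟩
          constructor
          · intro a ha
            rcases Sym.mem_cons.1 ha with rfl | ha'
            · omega
            · exact hM' a ha'
          · exact Sym.mem_cons_self _ _
      have hB : ((Finset.range (N+2)).sym (s+1)).filter (fun M => N+1 ∉ M)
          = (Finset.range (N+1)).sym (s+1) := by
        ext M
        simp only [Finset.mem_filter, Finset.mem_sym_iff, Finset.mem_range]
        constructor
        · rintro ⟨hall, hmem⟩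
          intro a ha
          have := hall a ha
          have : a ≠ N+1 := fun h => hmem (h ▸ ha)
          omega
        · intro hall
          constructor
          · intro a ha; have := hall a ha; omega
          · intro hmem; have := hall _ hmem; omega
      rw [hA, hB, Finset.sum_image (fun x _ y _ h => by
        rwa [Sym.cons_inj_right] at h)]
      have hval : ∀ M' : Sym ℕ s,
          (Polynomial.X : Polynomial ℕ) ^ ((Sym.cons (N+1) M' : Sym ℕ (s+1)) : Multiset ℕ).sum
          = Polynomial.X ^ (N+1) * Polynomial.X ^ (M' : Multiset ℕ).sum := by
        intro M'
        rw [Sym.coe_cons, Multiset.sum_cons, pow_add]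
      rw [Finset.sum_congr rfl (fun M' _ => hval M'), ← Finset.mul_sum, ihs, ihN (s+1)]
      have := qbinom_pascal' (N + 1 + s) s (by omega)
      rw [show N + 1 + (s+1) = (N + 1 + s) + 1 by omega, this,
        show N + 1 + s - s = N + 1 by omega, show N + (s+1) = N + 1 + s by omega]
      ring



lemma csum_zero (c : ℕ → ℕ) : csum c 0 = 0 := rfl

lemma csum_succ (c : ℕ → ℕ) (p : ℕ) : csum c (p+1) = csum c p + c p :=
  Finset.sum_range_succ c p

lemma csum_mono (c : ℕ → ℕ) {p q : ℕ} (h : p ≤ q) : csum c p ≤ csum c q :=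
  Finset.sum_le_sum_of_subset (Finset.range_subset_range.2 h)

lemma csum_shift (c : ℕ → ℕ) (k : ℕ) :
    csum c (k+1) = c 0 + csum (fun q => c (q+1)) k := by
  unfold csum
  rw [Finset.sum_range_succ' c k, add_comm]

lemma phiF_zero (c : ℕ → ℕ) : phiF c 0 = c 0 := by
  simp [phiF, csum_succ, csum_zero]

lemma phiF_succ_shift (c : ℕ → ℕ) (i : ℕ) :
    phiF c (i+1) = c 0 + 1 + phiF (fun q => c (q+1)) i := by
  simp only [phiF, csum_shift c (i+1)]
  omega

lemma psiF_zero (c : ℕ → ℕ) (t : ℕ) : psiF c 0 t = t := by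
  simp [psiF, csum_zero]

lemma psiF_succ_shift (c : ℕ → ℕ) (p t : ℕ) :
    psiF c (p+1) t = c 0 + 1 + psiF (fun q => c (q+1)) p t := by
  simp only [psiF, csum_shift c p]
  omega

lemma phiF_strictMono (c : ℕ → ℕ) : StrictMono (phiF c) := by
  apply strictMono_nat_of_lt_succ
  intro i
  have := csum_mono c (show i+1 ≤ i+1+1 by omega)
  unfold phiF
  omega

lemma le_phiF (c : ℕ → ℕ) (i : ℕ) : i ≤ phiF c i := Nat.le_add_right _ _

lemma psiF_lt_phiF (c : ℕ → ℕ) {p t j : ℕ} (ht : t < c p) (hpj : p ≤ j) :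
    psiF c p t < phiF c j := by
  have h1 : psiF c p t < p + csum c (p+1) := by
    rw [csum_succ]; unfold psiF; omega
  have h2 : p + csum c (p+1) ≤ j + csum c (j+1) :=
    Nat.add_le_add hpj (csum_mono c (by omega))
  unfold phiF
  omega

lemma phiF_lt_psiF (c : ℕ → ℕ) {i p : ℕ} (t : ℕ) (hip : i < p) :
    phiF c i < psiF c p t := by
  have h2 : csum c (i+1) ≤ csum c p := csum_mono c (by omega)
  unfold phiF psiF
  omega

lemma phiF_ne_psiF (c : ℕ → ℕ) {i p t : ℕ} (ht : t < c p) :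
    phiF c i ≠ psiF c p t := by
  rcases Nat.lt_or_ge i p with h | h
  · exact (phiF_lt_psiF c t h).ne
  · exact (psiF_lt_phiF c ht h).ne'

lemma psiF_lt_phiF_iff (c : ℕ → ℕ) {p t j : ℕ} (ht : t < c p) :
    psiF c p t < phiF c j ↔ p ≤ j := by
  refine ⟨fun h => ?_, fun h => psiF_lt_phiF c ht h⟩
  by_contra hc
  push_neg at hc
  have := phiF_lt_psiF c t hc
  omega

lemma psiF_inj (c : ℕ → ℕ) {p t p' t' : ℕ} (ht : t < c p) (ht' : t' < c p')
    (h : psiF c p t = psiF c p' t') : p = p' ∧ t = t' := by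
  have hpp : p = p' := by
    rcases Nat.lt_trichotomy p p' with hlt | heq | hgt
    · have h1 : psiF c p t < phiF c p := psiF_lt_phiF c ht le_rfl
      have h2 : phiF c p < psiF c p' t' := phiF_lt_psiF c t' hlt
      omega
    · exact heq
    · have h1 : psiF c p' t' < phiF c p' := psiF_lt_phiF c ht' le_rfl
      have h2 : phiF c p' < psiF c p t := phiF_lt_psiF c t hgt
      omega
  subst hpp
  refine ⟨rfl, ?_⟩
  unfold psiF at h
  omega

lemma phiF_pred (c : ℕ → ℕ) {j : ℕ} (hj : 1 ≤ j) (h0 : c j = 0) :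
    phiF c j = phiF c (j-1) + 1 := by
  obtain ⟨j', rfl⟩ : ∃ j', j = j' + 1 := ⟨j - 1, by omega⟩
  simp only [phiF, Nat.add_sub_cancel]
  rw [csum_succ c (j'+1), h0, csum_succ c j']
  omega

lemma mic_shift (m : ℕ) (xs : List ℕ) : ∀ (c : ℕ → ℕ) (i : ℕ),
    multiInsertCnt m c (i+1) xs = multiInsertCnt m (fun q => c (q+1)) i xs := by
  induction xs with
  | nil => intro c i; rfl
  | cons x xs ih =>
    intro c i
    show List.replicate (c (i+1)) m ++ x :: multiInsertCnt m c (i+2) xs = _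
    rw [ih]
    rfl

lemma mic_cons (m : ℕ) (c : ℕ → ℕ) (x : ℕ) (xs : List ℕ) :
    multiInsertCnt m c 0 (x :: xs)
      = List.replicate (c 0) m ++ x :: multiInsertCnt m (fun q => c (q+1)) 0 xs := by
  show List.replicate (c 0) m ++ x :: multiInsertCnt m c 1 xs = _
  rw [mic_shift]

lemma mic_length (m : ℕ) : ∀ (xs : List ℕ) (c : ℕ → ℕ),
    (multiInsertCnt m c 0 xs).length = phiF c xs.length := by
  intro xs
  induction xs with
  | nil => intro c; simp [multiInsertCnt, phiF_zero]
  | cons x xs ih =>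
    intro c
    rw [mic_cons]
    simp only [List.length_append, List.length_replicate, List.length_cons, ih]
    rw [phiF_succ_shift]
    omega

lemma mic_getD_phi (m : ℕ) : ∀ (xs : List ℕ) (c : ℕ → ℕ) (i : ℕ), i < xs.length →
    (multiInsertCnt m c 0 xs).getD (phiF c i) 0 = xs.getD i 0 := by
  intro xs
  induction xs with
  | nil => intro c i hi; simp at hi
  | cons x xs ih =>
    intro c i hi
    rw [mic_cons]
    cases i with
    | zero =>
      rw [phiF_zero, List.getD_append_right _ _ _ _ (by simp)]
      simp
    | succ i =>
      rw [phiF_succ_shift, List.getD_append_right _ _ _ _ (by simp; omega)]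
      simp only [List.length_replicate]
      rw [show c 0 + 1 + phiF (fun q => c (q+1)) i - c 0 = phiF (fun q => c (q+1)) i + 1 by omega]
      rw [List.getD_cons_succ]
      exact ih _ i (by simpa using hi)

lemma mic_getD_psi (m : ℕ) : ∀ (xs : List ℕ) (c : ℕ → ℕ) (p t : ℕ), p ≤ xs.length → t < c p →
    (multiInsertCnt m c 0 xs).getD (psiF c p t) 0 = m := by
  intro xs
  induction xs with
  | nil =>
    intro c p t hp ht
    simp only [List.length_nil, Nat.le_zero] at hp
    subst hp
    rw [psiF_zero]
    show (List.replicate (c 0) m).getD t 0 = m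
    rw [List.getD_eq_getElem _ _ (by simpa using ht)]
    simp
  | cons x xs ih =>
    intro c p t hp ht
    rw [mic_cons]
    cases p with
    | zero =>
      rw [psiF_zero, List.getD_append _ _ _ _ (by simpa using ht)]
      rw [List.getD_eq_getElem _ _ (by simpa using ht)]
      simp
    | succ p =>
      rw [psiF_succ_shift, List.getD_append_right _ _ _ _ (by simp; omega)]
      simp only [List.length_replicate]
      rw [show c 0 + 1 + psiF (fun q => c (q+1)) p t - c 0 = psiF (fun q => c (q+1)) p t + 1 by omega]
      rw [List.getD_cons_succ]
      exact ih _ p t (by simpa using hp) ht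

lemma mic_cover (m : ℕ) : ∀ (xs : List ℕ) (c : ℕ → ℕ) (a : ℕ),
    a < (multiInsertCnt m c 0 xs).length →
    (∃ i, i < xs.length ∧ a = phiF c i) ∨ (∃ p t, p ≤ xs.length ∧ t < c p ∧ a = psiF c p t) := by
  intro xs
  induction xs with
  | nil =>
    intro c a ha
    rw [mic_length] at ha
    simp only [List.length_nil] at ha ⊢
    rw [phiF_zero] at ha
    right
    exact ⟨0, a, le_rfl, ha, (psiF_zero c a).symm⟩
  | cons x xs ih =>
    intro c a ha
    rw [mic_length] at ha
    rcases Nat.lt_trichotomy a (c 0) with h0 | h0 | h0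
    · right
      exact ⟨0, a, by omega, h0, (psiF_zero c a).symm⟩
    · left
      exact ⟨0, by simp, by rw [phiF_zero]; omega⟩
    · have ha' : a - (c 0 + 1) < (multiInsertCnt m (fun q => c (q+1)) 0 xs).length := by
        rw [mic_length]
        rw [show (x :: xs).length = xs.length + 1 from rfl, phiF_succ_shift] at ha
        omega
      rcases ih _ _ ha' with ⟨i, hi, hai⟩ | ⟨p, t, hp, ht, hat⟩
      · left
        exact ⟨i + 1, by simpa using hi, by rw [phiF_succ_shift]; omega⟩
      · right
        exact ⟨p + 1, t, by simpa using hp, ht, by rw [psiF_succ_shift]; omega⟩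

lemma mic_mem (m : ℕ) : ∀ (xs : List ℕ) (c : ℕ → ℕ) (x : ℕ),
    x ∈ multiInsertCnt m c 0 xs → x = m ∨ x ∈ xs := by
  intro xs
  induction xs with
  | nil =>
    intro c x hx
    replace hx : x ∈ List.replicate (c 0) m := hx
    left; exact (List.eq_of_mem_replicate hx)
  | cons y xs ih =>
    intro c x hx
    rw [mic_cons] at hx
    rcases List.mem_append.1 hx with h | h
    · left; exact List.eq_of_mem_replicate h
    · rcases List.mem_cons.1 h with rfl | h'
      · right; exact List.mem_cons_self
      · rcases ih _ x h' with h'' | h''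
        · left; exact h''
        · right; exact List.mem_cons_of_mem _ h''
-- appended to devel.lean
instance SminversionDec (w : List ℕ) (B : Finset ℕ) (i j : ℕ) :
    Decidable (Sminversion w B i j) := by
  unfold Sminversion; infer_instance

lemma sminv_eq_card (w : List ℕ) (B : Finset ℕ) :
    sminv w B = ((Finset.range w.length ×ˢ Finset.range w.length).filter
      fun p => Sminversion w B p.1 p.2).card := by
  rw [sminv, ← Set.ncard_coe_finset]
  congr 1
  ext p
  simp only [Finset.coe_filter, Finset.mem_product, Finset.mem_range, Set.mem_setOf_eq]
  constructor
  · exact fun hp => ⟨⟨lt_trans hp.1 hp.2.1, hp.2.1⟩, hp⟩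
  · exact fun hp => hp.2
lemma sminv_insert (w : List ℕ) (B : Finset ℕ) (m : ℕ) (c : ℕ → ℕ)
    (h : IsSSW w B) (hm : ∀ x ∈ w, x ≤ m)
    (hno : ∀ b ∈ B, (b + 1 ∈ B ∨ b + 1 = w.length) → w.getD b 0 ≠ m)
    (hc : ∀ p, c p ≠ 0 → p ∈ insert w.length B) :
    sminv (multiInsertCnt m c 0 w) (singletonBreaks c w B)
      = sminv w B + ∑ p ∈ insert w.length B, c p * (B.filter fun b => p ≤ b).card := by
  classical
  obtain ⟨hB, h0B, _, hsm⟩ := h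
  set W := multiInsertCnt m c 0 w with hWdef
  set B' := singletonBreaks c w B with hB'def
  have hLen : W.length = phiF c w.length := mic_length m w c
  have hzero : ∀ j : ℕ, j < w.length → (0:ℕ) ∈ B := fun j hj =>
    h0B (fun he => by rw [he] at hj; simp at hj)
  have hcz : ∀ p, p < w.length → p ∉ B → c p = 0 := by
    intro p hp hpB
    by_contra hne
    rcases Finset.mem_insert.1 (hc p hne) with he | hmem
    · omega
    · exact hpB hmem
  have getphi : ∀ j, j < w.length → W.getD (phiF c j) 0 = w.getD j 0 :=
    fun j hj => mic_getD_phi m w c j hj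
  have getpsi : ∀ p t, p ≤ w.length → t < c p → W.getD (psiF c p t) 0 = m :=
    fun p t hp ht => mic_getD_psi m w c p t hp ht
  have wle : ∀ j, j < w.length → w.getD j 0 ≤ m := by
    intro j hj
    have : w.getD j 0 ∈ w := by
      rw [List.getD_eq_getElem _ _ hj]
      exact List.getElem_mem _
    exact hm _ this
  have Wle : ∀ a, a < W.length → W.getD a 0 ≤ m := by
    intro a ha
    have hmem : W.getD a 0 ∈ W := by
      rw [List.getD_eq_getElem _ _ ha]
      exact List.getElem_mem _
    rcases mic_mem m w c _ hmem with he | hw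
    · omega
    · exact hm _ hw
  have memB' : ∀ a : ℕ, a ∈ B' ↔ ((∃ b ∈ B, a = phiF c b) ∨
      ∃ p, p ∈ insert w.length B ∧ ∃ t, t < c p ∧ a = psiF c p t) := by
    intro a
    constructor
    · intro ha
      rcases Finset.mem_union.1 ha with h1 | h1
      · obtain ⟨b, hb, hba⟩ := Finset.mem_image.1 h1
        exact Or.inl ⟨b, hb, hba.symm⟩
      · obtain ⟨p, hp, hpa⟩ := Finset.mem_biUnion.1 h1
        obtain ⟨t, ht, hta⟩ := Finset.mem_image.1 hpa
        exact Or.inr ⟨p, hp, t, Finset.mem_range.1 ht, hta.symm⟩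
    · intro ha
      rcases ha with ⟨b, hb, he⟩ | ⟨p, hp, t, ht, he⟩
      · exact Finset.mem_union_left _ (Finset.mem_image.2 ⟨b, hb, he.symm⟩)
      · exact Finset.mem_union_right _
          (Finset.mem_biUnion.2 ⟨p, hp, Finset.mem_image.2 ⟨t, Finset.mem_range.2 ht, he.symm⟩⟩)
  have phimem : ∀ j : ℕ, phiF c j ∈ B' ↔ j ∈ B := by
    intro j
    rw [memB']
    constructor
    · rintro (⟨b, hb, hbe⟩ | ⟨p, hp, t, ht, he⟩)
      · rwa [(phiF_strictMono c).injective hbe]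
      · exact absurd he (phiF_ne_psiF c ht)
    · intro hj
      exact Or.inl ⟨j, hj, rfl⟩
  -- G3
  have G3 : ∀ a p t, p ≤ w.length → t < c p → ¬ Sminversion W B' a (psiF c p t) := by
    intro a p t hp ht hS
    obtain ⟨hab, hbL, hval, _⟩ := hS
    rw [getpsi p t hp ht] at hval
    have haL : a < W.length := lt_trans hab hbL
    have := Wle a haL
    omega
  -- G2
  have G2 : ∀ p t j, p ∈ insert w.length B → t < c p → j < w.length →
      (Sminversion W B' (psiF c p t) (phiF c j) ↔
        (p ≤ j ∧ (w.getD j 0 < m ∧ (j ∈ B ∨ ((j-1) ∈ B ∧ w.getD (j-1) 0 = m))))) := by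
    intro p t j hp ht hj
    have hpn : p ≤ w.length := by
      rcases Finset.mem_insert.1 hp with rfl | hpB
      · exact le_rfl
      · exact (hB p hpB).le
    have hbL : phiF c j < W.length := by rw [hLen]; exact phiF_strictMono c hj
    have hvpsi := getpsi p t hpn ht
    have hvj := getphi j hj
    by_cases hjB : j ∈ B
    · constructor
      · rintro ⟨hab, _, hval, _⟩
        rw [hvpsi, hvj] at hval
        exact ⟨(psiF_lt_phiF_iff c ht).1 hab, hval, Or.inl hjB⟩
      · rintro ⟨hpj, hval, _⟩
        exact ⟨psiF_lt_phiF c ht hpj, hbL, by rw [hvpsi, hvj]; exact hval,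
          Or.inl ((phimem j).2 hjB)⟩
    · have hj1 : 1 ≤ j := by
        rcases Nat.eq_zero_or_pos j with rfl | h1
        · exact absurd (hzero 0 hj) hjB
        · exact h1
      have hcj : c j = 0 := hcz j hj hjB
      have hpred : phiF c j = phiF c (j-1) + 1 := phiF_pred c hj1 hcj
      have hj1n : j - 1 < w.length := by omega
      have hb1 : W.getD (phiF c j - 1) 0 = w.getD (j-1) 0 := by
        rw [hpred, Nat.add_sub_cancel]
        exact getphi _ hj1n
      constructor
      · rintro ⟨hab, _, hval, hdisj⟩
        rw [hvpsi, hvj] at hval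
        refine ⟨(psiF_lt_phiF_iff c ht).1 hab, hval, Or.inr ?_⟩
        rcases hdisj with hd | hd | hd | hd
        · exact absurd ((phimem j).1 hd) hjB
        · rw [hvpsi, hb1] at hd
          have := wle _ hj1n
          omega
        · obtain ⟨_, heq, hmem⟩ := hd
          rw [hb1, hvpsi] at heq
          rw [hpred, Nat.add_sub_cancel, phimem] at hmem
          exact ⟨hmem, heq⟩
        · obtain ⟨_, _, hlt, heq⟩ := hd
          rw [hb1] at hlt heq
          rw [hvpsi] at heq
          rw [heq] at hlt
          have hlt2 : phiF c j - 2 < W.length := by omega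
          have := Wle _ hlt2
          omega
      · rintro ⟨hpj, hval, hor⟩
        rcases hor with hjB' | ⟨hmem, heq⟩
        · exact absurd hjB' hjB
        refine ⟨psiF_lt_phiF c ht hpj, hbL, by rw [hvpsi, hvj]; exact hval,
          Or.inr (Or.inr (Or.inl ⟨?_, ?_, ?_⟩))⟩
        · intro he
          have : psiF c p t = phiF c (j-1) := by omega
          exact (phiF_ne_psiF c ht) this.symm
        · rw [hb1, hvpsi]; exact heq
        · rw [hpred, Nat.add_sub_cancel]
          exact (phimem _).2 hmem
  -- G1
  have G1 : ∀ i j, i < j → j < w.length →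
      (Sminversion W B' (phiF c i) (phiF c j) ↔ Sminversion w B i j) := by
    intro i j hij hj
    have hi : i < w.length := lt_trans hij hj
    have hbL : phiF c j < W.length := by rw [hLen]; exact phiF_strictMono c hj
    have hvi := getphi i hi
    have hvj := getphi j hj
    by_cases hjB : j ∈ B
    · constructor
      · rintro ⟨_, _, hval, _⟩
        rw [hvi, hvj] at hval
        exact ⟨hij, hj, hval, Or.inl hjB⟩
      · rintro ⟨_, _, hval, _⟩
        exact ⟨phiF_strictMono c hij, hbL, by rw [hvi, hvj]; exact hval,
          Or.inl ((phimem j).2 hjB)⟩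
    · have hj1 : 1 ≤ j := by
        rcases Nat.eq_zero_or_pos j with rfl | h1
        · exact absurd (hzero 0 hj) hjB
        · exact h1
      have hcj : c j = 0 := hcz j hj hjB
      have hpred : phiF c j = phiF c (j-1) + 1 := phiF_pred c hj1 hcj
      have hj1n : j - 1 < w.length := by omega
      have hb1 : W.getD (phiF c j - 1) 0 = w.getD (j-1) 0 := by
        rw [hpred, Nat.add_sub_cancel]
        exact getphi _ hj1n
      have hane : (phiF c i + 1 = phiF c j) ↔ (i + 1 = j) := by
        constructor
        · intro he
          by_contra hne
          have hlt : i + 1 ≤ j - 1 := by omega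
          have h1 : phiF c (i+1) ≤ phiF c (j-1) := (phiF_strictMono c).monotone hlt
          have h2 : phiF c i < phiF c (i+1) := phiF_strictMono c (by omega)
          omega
        · intro he
          have hji : j - 1 = i := by omega
          rw [hpred, hji]
      by_cases hj1B : (j-1) ∈ B
      · constructor
        · rintro ⟨_, _, hval, hdisj⟩
          rw [hvi, hvj] at hval
          refine ⟨hij, hj, hval, ?_⟩
          rcases hdisj with hd | hd | hd | hd
          · exact absurd ((phimem j).1 hd) hjB
          · rw [hvi, hb1] at hd
            exact Or.inr (Or.inl hd)
          · obtain ⟨hne, heq, _⟩ := hd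
            rw [hb1, hvi] at heq
            exact Or.inr (Or.inr (Or.inl ⟨fun he => hne (hane.2 he), heq, hj1B⟩))
          · obtain ⟨hne, _, _, heq⟩ := hd
            rw [hb1, hvi] at heq
            exact Or.inr (Or.inr (Or.inl ⟨fun he => hne (hane.2 he), heq, hj1B⟩))
        · rintro ⟨_, _, hval, hdisj⟩
          refine ⟨phiF_strictMono c hij, hbL, by rw [hvi, hvj]; exact hval, ?_⟩
          rcases hdisj with hd | hd | hd | hd
          · exact absurd hd hjB
          · rw [← hvi, ← hb1] at hd
            exact Or.inr (Or.inl hd)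
          · obtain ⟨hne, heq, _⟩ := hd
            refine Or.inr (Or.inr (Or.inl ⟨fun he => hne (hane.1 he),
              by rw [hb1, hvi]; exact heq, ?_⟩))
            rw [hpred, Nat.add_sub_cancel]
            exact (phimem _).2 hj1B
          · obtain ⟨hne, _, _, heq⟩ := hd
            refine Or.inr (Or.inr (Or.inl ⟨fun he => hne (hane.1 he),
              by rw [hb1, hvi]; exact heq, ?_⟩))
            rw [hpred, Nat.add_sub_cancel]
            exact (phimem _).2 hj1B
      · have hj2 : 2 ≤ j := by
          rcases Nat.lt_or_ge j 2 with h2 | h2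
          · exfalso
            have hj1e : j = 1 := by omega
            rw [hj1e] at hj1B
            exact absurd (hzero j hj) (by simpa using hj1B)
          · exact h2
        have hcj1 : c (j-1) = 0 := hcz (j-1) hj1n hj1B
        have hpred2 : phiF c (j-1) = phiF c (j-2) + 1 := by
          have := phiF_pred c (show 1 ≤ j-1 by omega) hcj1
          rwa [show j-1-1 = j-2 by omega] at this
        have hj2n : j-2 < w.length := by omega
        have hb2 : W.getD (phiF c j - 2) 0 = w.getD (j-2) 0 := by
          rw [hpred, hpred2, show phiF c (j-2) + 1 + 1 - 2 = phiF c (j-2) by omega]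
          exact getphi _ hj2n
        have hnotB1 : phiF c j - 1 ∉ B' := by
          rw [hpred, Nat.add_sub_cancel, phimem]
          exact hj1B
        have h2le : 2 ≤ phiF c j := le_trans hj2 (le_phiF c j)
        constructor
        · rintro ⟨_, _, hval, hdisj⟩
          rw [hvi, hvj] at hval
          refine ⟨hij, hj, hval, ?_⟩
          rcases hdisj with hd | hd | hd | hd
          · exact absurd ((phimem j).1 hd) hjB
          · rw [hvi, hb1] at hd
            exact Or.inr (Or.inl hd)
          · exact absurd hd.2.2 hnotB1
          · obtain ⟨hne, _, hlt, heq⟩ := hd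
            rw [hb1, hb2] at hlt
            rw [hb1, hvi] at heq
            exact Or.inr (Or.inr (Or.inr ⟨fun he => hne (hane.2 he), hj2, hlt, heq⟩))
        · rintro ⟨_, _, hval, hdisj⟩
          refine ⟨phiF_strictMono c hij, hbL, by rw [hvi, hvj]; exact hval, ?_⟩
          rcases hdisj with hd | hd | hd | hd
          · exact absurd hd hjB
          · rw [← hvi, ← hb1] at hd
            exact Or.inr (Or.inl hd)
          · exact absurd hd.2.2 hj1B
          · obtain ⟨hne, _, hlt, heq⟩ := hd
            exact Or.inr (Or.inr (Or.inr ⟨fun he => hne (hane.1 he), h2le,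
              by rw [hb1, hb2]; exact hlt, by rw [hb1, hvi]; exact heq⟩))
  -- counting
  have Ncount : ∀ p ∈ insert w.length B,
      ((Finset.range w.length).filter fun j => p ≤ j ∧
        (w.getD j 0 < m ∧ (j ∈ B ∨ ((j-1) ∈ B ∧ w.getD (j-1) 0 = m)))).card
      = (B.filter fun b => p ≤ b).card := by
    intro p hp
    apply Finset.card_bij (fun j _ => if j ∈ B then j else j - 1)
    · intro j hjmem
      simp only [Finset.mem_filter, Finset.mem_range] at hjmem
      obtain ⟨hjn, hpj, _, hQ⟩ := hjmem
      by_cases hjB : j ∈ B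
      · simp only [if_pos hjB, Finset.mem_filter]
        exact ⟨hjB, hpj⟩
      · simp only [if_neg hjB, Finset.mem_filter]
        rcases hQ with h' | ⟨hj1B, _⟩
        · exact absurd h' hjB
        · refine ⟨hj1B, ?_⟩
          rcases Finset.mem_insert.1 hp with rfl | hpB
          · omega
          · have : p ≠ j := fun he => hjB (he ▸ hpB)
            omega
    · intro j1 hj1 j2 hj2 he
      simp only [Finset.mem_filter, Finset.mem_range] at hj1 hj2
      have e1 : 1 ≤ j1 ∨ j1 ∈ B := by
        by_cases hb : j1 ∈ B
        · exact Or.inr hb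
        · left
          rcases Nat.eq_zero_or_pos j1 with rfl | hpos
          · exact absurd (hzero 0 hj1.1) hb
          · exact hpos
      by_cases h1 : j1 ∈ B <;> by_cases h2 : j2 ∈ B <;> simp only [h1, h2, if_true, if_false] at he
      · exact he
      · exfalso
        rcases hj2.2.2.2 with h' | ⟨_, hval⟩
        · exact h2 h'
        · have hv1 : w.getD j1 0 < m := hj1.2.2.1
          rw [← he] at hval
          omega
      · exfalso
        rcases hj1.2.2.2 with h' | ⟨_, hval⟩
        · exact h1 h'
        · have hv2 : w.getD j2 0 < m := hj2.2.2.1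
          rw [he] at hval
          omega
      · have g1 : 1 ≤ j1 := by
          rcases Nat.eq_zero_or_pos j1 with rfl | hpos
          · exact absurd (hzero 0 hj1.1) h1
          · exact hpos
        have g2 : 1 ≤ j2 := by
          rcases Nat.eq_zero_or_pos j2 with rfl | hpos
          · exact absurd (hzero 0 hj2.1) h2
          · exact hpos
        omega
    · intro b hb
      simp only [Finset.mem_filter] at hb
      obtain ⟨hbB, hpb⟩ := hb
      have hbn : b < w.length := hB b hbB
      by_cases hbm : w.getD b 0 = m
      · have hcon : ¬ (b + 1 ∈ B ∨ b + 1 = w.length) := fun hcon => hno b hbB hcon hbm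
        push_neg at hcon
        obtain ⟨hb1B, hb1n⟩ := hcon
        have hb1lt : b + 1 < w.length := by omega
        have hne := hsm b hb1lt hb1B
        have hle := wle (b+1) hb1lt
        refine ⟨b+1, ?_, ?_⟩
        · simp only [Finset.mem_filter, Finset.mem_range]
          exact ⟨hb1lt, by omega, by omega,
            Or.inr ⟨by simpa using hbB, by simpa using hbm⟩⟩
        · simp [hb1B]
      · have hlt : w.getD b 0 < m := lt_of_le_of_ne (wle b hbn) hbm
        refine ⟨b, ?_, by simp [hbB]⟩
        simp only [Finset.mem_filter, Finset.mem_range]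
        exact ⟨hbn, hpb, hlt, Or.inl hbB⟩
  -- split of the inversion set of W
  have hsplit : ((Finset.range W.length ×ˢ Finset.range W.length).filter
      fun q => Sminversion W B' q.1 q.2)
      = ((Finset.range w.length ×ˢ Finset.range w.length).filter
          fun q => Sminversion w B q.1 q.2).image (fun q : ℕ × ℕ => (phiF c q.1, phiF c q.2))
        ∪ (insert w.length B).biUnion (fun p => (Finset.range (c p)).biUnion fun t =>
            ((Finset.range w.length).filter fun j => p ≤ j ∧
              (w.getD j 0 < m ∧ (j ∈ B ∨ ((j-1) ∈ B ∧ w.getD (j-1) 0 = m)))).image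
              fun j => (psiF c p t, phiF c j)) := by
    ext q
    obtain ⟨a, b⟩ := q
    simp only [Finset.mem_filter, Finset.mem_product, Finset.mem_range, Finset.mem_union]
    constructor
    · rintro ⟨⟨haL, hbL⟩, hS⟩
      rcases mic_cover m w c b hbL with ⟨j, hjn, rfl⟩ | ⟨p, t, hpn, ht, rfl⟩
      swap
      · exact absurd hS (G3 a p t hpn ht)
      rcases mic_cover m w c a haL with ⟨i, hin, rfl⟩ | ⟨p, t, hpn, ht, rfl⟩
      · have hij : i < j := (phiF_strictMono c).lt_iff_lt.1 hS.1
        left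
        apply Finset.mem_image.2
        refine ⟨(i, j), ?_, rfl⟩
        simp only [Finset.mem_filter, Finset.mem_product, Finset.mem_range]
        exact ⟨⟨hin, hjn⟩, (G1 i j hij hjn).1 hS⟩
      · have hpG : p ∈ insert w.length B := hc p (by omega)
        obtain ⟨hpj, hQ⟩ := (G2 p t j hpG ht hjn).1 hS
        right
        apply Finset.mem_biUnion.2
        refine ⟨p, hpG, Finset.mem_biUnion.2 ⟨t, Finset.mem_range.2 ht,
          Finset.mem_image.2 ⟨j, ?_, rfl⟩⟩⟩
        simp only [Finset.mem_filter, Finset.mem_range]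
        exact ⟨hjn, hpj, hQ⟩
    · rintro (hq | hq)
      · obtain ⟨⟨i, j⟩, hmem, he⟩ := Finset.mem_image.1 hq
        simp only [Finset.mem_filter, Finset.mem_product, Finset.mem_range] at hmem
        obtain ⟨⟨hin, hjn⟩, hS⟩ := hmem
        cases he
        refine ⟨⟨?_, ?_⟩, (G1 i j hS.1 hjn).2 hS⟩
        · rw [hLen]; exact phiF_strictMono c hin
        · rw [hLen]; exact phiF_strictMono c hjn
      · obtain ⟨p, hp, h2⟩ := Finset.mem_biUnion.1 hq
        obtain ⟨t, ht, h3⟩ := Finset.mem_biUnion.1 h2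
        obtain ⟨j, hj, he⟩ := Finset.mem_image.1 h3
        rw [Finset.mem_range] at ht
        simp only [Finset.mem_filter, Finset.mem_range] at hj
        obtain ⟨hjn, hpj, hQ⟩ := hj
        cases he
        have hS := (G2 p t j hp ht hjn).2 ⟨hpj, hQ⟩
        refine ⟨⟨?_, ?_⟩, hS⟩
        · rw [hLen]
          exact lt_trans hS.1 (phiF_strictMono c hjn)
        · rw [hLen]; exact phiF_strictMono c hjn
  have hdisj : Disjoint
      (((Finset.range w.length ×ˢ Finset.range w.length).filter
          fun q => Sminversion w B q.1 q.2).image (fun q : ℕ × ℕ => (phiF c q.1, phiF c q.2)))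
      ((insert w.length B).biUnion (fun p => (Finset.range (c p)).biUnion fun t =>
          ((Finset.range w.length).filter fun j => p ≤ j ∧
            (w.getD j 0 < m ∧ (j ∈ B ∨ ((j-1) ∈ B ∧ w.getD (j-1) 0 = m)))).image
            fun j => (psiF c p t, phiF c j))) := by
    rw [Finset.disjoint_left]
    intro q hq1 hq2
    obtain ⟨⟨i, j⟩, _, he1⟩ := Finset.mem_image.1 hq1
    obtain ⟨p, _, h2⟩ := Finset.mem_biUnion.1 hq2
    obtain ⟨t, ht, h3⟩ := Finset.mem_biUnion.1 h2
    obtain ⟨j', _, he2⟩ := Finset.mem_image.1 h3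
    rw [← he1] at he2
    have heq : phiF c i = psiF c p t := congrArg Prod.fst he2.symm
    exact phiF_ne_psiF c (Finset.mem_range.1 ht) heq
  have cardA1 : (((Finset.range w.length ×ˢ Finset.range w.length).filter
      fun q => Sminversion w B q.1 q.2).image
        (fun q : ℕ × ℕ => (phiF c q.1, phiF c q.2))).card
      = ((Finset.range w.length ×ˢ Finset.range w.length).filter
          fun q => Sminversion w B q.1 q.2).card := by
    apply Finset.card_image_of_injOn
    intro q1 _ q2 _ he
    have h1 : phiF c q1.1 = phiF c q2.1 := congrArg Prod.fst he
    have h2 : phiF c q1.2 = phiF c q2.2 := congrArg Prod.snd he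
    exact Prod.ext ((phiF_strictMono c).injective h1) ((phiF_strictMono c).injective h2)
  have cardA2 : ((insert w.length B).biUnion (fun p => (Finset.range (c p)).biUnion fun t =>
      ((Finset.range w.length).filter fun j => p ≤ j ∧
        (w.getD j 0 < m ∧ (j ∈ B ∨ ((j-1) ∈ B ∧ w.getD (j-1) 0 = m)))).image
        fun j => (psiF c p t, phiF c j))).card
      = ∑ p ∈ insert w.length B, c p * (B.filter fun b => p ≤ b).card := by
    rw [Finset.card_biUnion]
    · apply Finset.sum_congr rfl
      intro p hp
      rw [Finset.card_biUnion]
      · have hcard : ∀ t ∈ Finset.range (c p),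
            (((Finset.range w.length).filter fun j => p ≤ j ∧
              (w.getD j 0 < m ∧ (j ∈ B ∨ ((j-1) ∈ B ∧ w.getD (j-1) 0 = m)))).image
              fun j => (psiF c p t, phiF c j)).card
            = (B.filter fun b => p ≤ b).card := by
          intro t _
          rw [← Ncount p hp]
          apply Finset.card_image_of_injOn
          intro j1 _ j2 _ he
          exact (phiF_strictMono c).injective (congrArg Prod.snd he)
        rw [Finset.sum_congr rfl hcard, Finset.sum_const, Finset.card_range, smul_eq_mul]
      · intro t1 ht1 t2 ht2 hne
        rw [Function.onFun, Finset.disjoint_left]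
        intro q hq1 hq2
        obtain ⟨j1, _, he1⟩ := Finset.mem_image.1 hq1
        obtain ⟨j2, _, he2⟩ := Finset.mem_image.1 hq2
        rw [← he2] at he1
        have := congrArg Prod.fst he1
        exact hne (psiF_inj c (Finset.mem_range.1 ht1) (Finset.mem_range.1 ht2)
          ((psiF_inj c (Finset.mem_range.1 ht1) (Finset.mem_range.1 ht2) this).2 ▸ rfl) ).2
    · intro p1 hp1 p2 hp2 hne
      rw [Function.onFun, Finset.disjoint_left]
      intro q hq1 hq2
      obtain ⟨t1, ht1, h1⟩ := Finset.mem_biUnion.1 hq1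
      obtain ⟨t2, ht2, h2⟩ := Finset.mem_biUnion.1 hq2
      obtain ⟨j1, _, he1⟩ := Finset.mem_image.1 h1
      obtain ⟨j2, _, he2⟩ := Finset.mem_image.1 h2
      rw [← he2] at he1
      exact hne (psiF_inj c (Finset.mem_range.1 ht1) (Finset.mem_range.1 ht2)
        (congrArg Prod.fst he1)).1
  rw [sminv_eq_card W B', hsplit, Finset.card_union_of_disjoint hdisj, cardA1, cardA2,
    sminv_eq_card w B]
instance AscentAtDec (w : List ℕ) (B : Finset ℕ) (i : ℕ) : Decidable (AscentAt w B i) := by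
  unfold AscentAt; infer_instance

instance DescentAtDec (w : List ℕ) (B : Finset ℕ) (i : ℕ) : Decidable (DescentAt w B i) := by
  unfold DescentAt; infer_instance

lemma card_blocks (w : List ℕ) (B : Finset ℕ) (h : IsSSW w B) :
    numAsc w B + numDesc w B + B.card = w.length := by
  classical
  obtain ⟨hB, h0B, _, hsm⟩ := h
  rcases Nat.eq_zero_or_pos w.length with h0 | hpos
  · have hBe : B = ∅ :=
      Finset.eq_empty_of_forall_notMem (fun b hb => by have := hB b hb; omega)
    have ha : {i | AscentAt w B i} = ∅ :=
      Set.eq_empty_iff_forall_notMem.2 (fun i hi => by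
        obtain ⟨h1, _, _⟩ := hi; omega)
    have hd : {i | DescentAt w B i} = ∅ :=
      Set.eq_empty_iff_forall_notMem.2 (fun i hi => by
        obtain ⟨h1, _, _⟩ := hi; omega)
    rw [numAsc, numDesc, ha, hd, hBe]
    simp [h0]
  · have h0mem : (0:ℕ) ∈ B := h0B (fun he => by rw [he] at hpos; simp at hpos)
    have ha : numAsc w B = ((Finset.range w.length).filter fun i => AscentAt w B i).card := by
      rw [numAsc, ← Set.ncard_coe_finset]
      congr 1
      ext i
      simp only [Finset.coe_filter, Set.mem_setOf_eq, Finset.mem_range]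
      exact ⟨fun hi => ⟨by have := hi.1; omega, hi⟩, fun hi => hi.2⟩
    have hd : numDesc w B = ((Finset.range w.length).filter fun i => DescentAt w B i).card := by
      rw [numDesc, ← Set.ncard_coe_finset]
      congr 1
      ext i
      simp only [Finset.coe_filter, Set.mem_setOf_eq, Finset.mem_range]
      exact ⟨fun hi => ⟨by have := hi.1; omega, hi⟩, fun hi => hi.2⟩
    have hdisj : Disjoint ((Finset.range w.length).filter fun i => AscentAt w B i)
        ((Finset.range w.length).filter fun i => DescentAt w B i) := by
      rw [Finset.disjoint_left]
      intro i h1 h2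
      obtain ⟨_, _, hlt⟩ := (Finset.mem_filter.1 h1).2
      obtain ⟨_, _, hgt⟩ := (Finset.mem_filter.1 h2).2
      omega
    have hunion : ((Finset.range w.length).filter fun i => AscentAt w B i)
        ∪ ((Finset.range w.length).filter fun i => DescentAt w B i)
        = (Finset.range w.length).filter fun i => i + 1 < w.length ∧ (i+1) ∉ B := by
      ext i
      simp only [Finset.mem_union, Finset.mem_filter, Finset.mem_range]
      constructor
      · rintro (⟨hi, h1, h2, _⟩ | ⟨hi, h1, h2, _⟩) <;> exact ⟨hi, h1, h2⟩
      · rintro ⟨hi, h1, h2⟩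
        have hne := hsm i h1 h2
        rcases lt_or_gt_of_ne hne with hlt | hgt
        · exact Or.inl ⟨hi, h1, h2, hlt⟩
        · exact Or.inr ⟨hi, h1, h2, hgt⟩
    have hcardD : ((Finset.range w.length).filter
        fun i => i + 1 < w.length ∧ (i+1) ∉ B).card
        = (Finset.range w.length \ B).card := by
      apply Finset.card_bij (fun i _ => i + 1)
      · intro i hi
        simp only [Finset.mem_filter, Finset.mem_range] at hi
        simp only [Finset.mem_sdiff, Finset.mem_range]
        exact ⟨hi.2.1, hi.2.2⟩
      · intro i1 _ i2 _ he
        omega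
      · intro j hj
        simp only [Finset.mem_sdiff, Finset.mem_range] at hj
        have hj0 : j ≠ 0 := fun he => hj.2 (he ▸ h0mem)
        refine ⟨j - 1, ?_, by omega⟩
        simp only [Finset.mem_filter, Finset.mem_range]
        refine ⟨by omega, by rw [show j - 1 + 1 = j by omega]; exact hj.1,
          by rw [show j - 1 + 1 = j by omega]; exact hj.2⟩
    have hsub : B ⊆ Finset.range w.length := fun b hb => Finset.mem_range.2 (hB b hb)
    have hsd : (Finset.range w.length \ B).card = w.length - B.card := by
      rw [Finset.card_sdiff_of_subset hsub, Finset.card_range]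
    have hBle : B.card ≤ w.length := by
      have := Finset.card_le_card hsub
      rwa [Finset.card_range] at this
    have := Finset.card_union_of_disjoint hdisj
    rw [hunion, hcardD, hsd] at this
    omega
/-- Singleton insertion: for a segmented Smirnov word `w` of length `n` with
`k` ascents, `l` descents, all letters `≤ m`, and no singleton block `m`, the
q-enumerator (w.r.t. `sminv`) of the words obtained by inserting `s` new
singleton blocks containing `m` into the gaps between blocks (repetitions
allowed) is `[n-k-l+s choose s]_q · q^{sminv w}`. -/
theorem stmt7 (w : List ℕ) (B : Finset ℕ) (m k l s : ℕ) (h : IsSSW w B)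
    (hm : ∀ x ∈ w, x ≤ m)
    (hno : ∀ b ∈ B, (b + 1 ∈ B ∨ b + 1 = w.length) → w.getD b 0 ≠ m)
    (hk : numAsc w B = k) (hl : numDesc w B = l) :
    ∑ M ∈ (insert w.length B).sym s,
      Polynomial.X ^ sminv
        (multiInsertCnt m (fun p => Multiset.count p (M : Multiset ℕ)) 0 w)
        (singletonBreaks (fun p => Multiset.count p (M : Multiset ℕ)) w B) =
    qbinom (w.length - k - l + s) s * Polynomial.X ^ sminv w B := by
  classical
  have hB : ∀ b ∈ B, b < w.length := h.1
  have hcard := card_blocks w B h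
  rw [hk, hl] at hcard
  have hBle : B.card ≤ w.length := by omega
  have hnkl : w.length - k - l = B.card := by omega
  -- step 1: rewrite each summand
  have hform : ∀ M ∈ (insert w.length B).sym s,
      (Polynomial.X : Polynomial ℕ) ^ sminv
        (multiInsertCnt m (fun p => Multiset.count p (M : Multiset ℕ)) 0 w)
        (singletonBreaks (fun p => Multiset.count p (M : Multiset ℕ)) w B)
      = Polynomial.X ^ sminv w B *
          Polynomial.X ^ ((M : Multiset ℕ).map
            (fun p => (B.filter fun b => p ≤ b).card)).sum := by
    intro M hM
    rw [← pow_add]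
    congr 1
    have hins := sminv_insert w B m (fun p => Multiset.count p (M : Multiset ℕ)) h hm hno
      (fun p hp => (Finset.mem_sym_iff.1 hM) p (Multiset.count_ne_zero.mp hp))
    rw [hins]
    congr 1
    rw [Finset.sum_multiset_map_count]
    simp only [smul_eq_mul]
    exact (Finset.sum_subset
      (fun a ha => Finset.mem_sym_iff.1 hM a (Multiset.mem_toFinset.1 ha))
      (fun a _ ha => by
        have h0 : Multiset.count a (M : Multiset ℕ) = 0 :=
          Multiset.count_eq_zero.2 (fun hmem => ha (Multiset.mem_toFinset.2 hmem))
        simp [h0])).symm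
  rw [Finset.sum_congr rfl hform, ← Finset.mul_sum]
  -- step 2: reindex the sum
  have hfle : ∀ p : ℕ, (B.filter fun b => p ≤ b).card ≤ B.card :=
    fun p => Finset.card_le_card (Finset.filter_subset _ _)
  set f' : ℕ → ℕ := fun p => if p ∈ insert w.length B then (B.filter fun b => p ≤ b).card
    else B.card + 1 + p with hf'
  have hanti : ∀ p q, p ∈ insert w.length B → q ∈ insert w.length B → p < q →
      (B.filter fun b => q ≤ b).card < (B.filter fun b => p ≤ b).card := by
    intro p q hp hq hpq
    have hpB : p ∈ B := by
      rcases Finset.mem_insert.1 hp with rfl | hpB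
      · exfalso
        rcases Finset.mem_insert.1 hq with rfl | hqB
        · omega
        · have := hB q hqB; omega
      · exact hpB
    apply Finset.card_lt_card
    have hsub2 : (B.filter fun b => q ≤ b) ⊆ (B.filter fun b => p ≤ b) := by
      intro x hx
      rw [Finset.mem_filter] at hx ⊢
      exact ⟨hx.1, by omega⟩
    rw [Finset.ssubset_iff_of_subset hsub2]
    exact ⟨p, Finset.mem_filter.2 ⟨hpB, le_rfl⟩, fun hmem => by
      have := (Finset.mem_filter.1 hmem).2; omega⟩
  have hinj' : Function.Injective f' := by
    intro p q he
    simp only [hf'] at he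
    by_cases hp : p ∈ insert w.length B <;> by_cases hq : q ∈ insert w.length B
    · rw [if_pos hp, if_pos hq] at he
      rcases Nat.lt_trichotomy p q with hlt | heq | hgt
      · exact absurd he (by have := hanti p q hp hq hlt; omega)
      · exact heq
      · exact absurd he (by have := hanti q p hq hp hgt; omega)
    · rw [if_pos hp, if_neg hq] at he
      have := hfle p; omega
    · rw [if_neg hp, if_pos hq] at he
      have := hfle q; omega
    · rw [if_neg hp, if_neg hq] at he
      omega
  have hnmem : w.length ∉ B := fun hmem => by have := hB _ hmem; omega
  have hGcard : (insert w.length B).card = B.card + 1 := by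
    rw [Finset.card_insert_of_notMem hnmem]
  have himg : (insert w.length B).image f' = Finset.range (B.card + 1) := by
    apply Finset.eq_of_subset_of_card_le
    · intro v hv
      obtain ⟨p, hp, he⟩ := Finset.mem_image.1 hv
      rw [Finset.mem_range, ← he]
      simp only [hf', if_pos hp]
      have := hfle p; omega
    · rw [Finset.card_range, Finset.card_image_of_injective _ hinj', hGcard]
  have hgf : ∀ p, Function.invFun f' (f' p) = p := Function.leftInverse_invFun hinj'
  have hfg : ∀ v ∈ Finset.range (B.card + 1),
      f' (Function.invFun f' v) = v ∧ Function.invFun f' v ∈ insert w.length B := by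
    intro v hv
    rw [← himg] at hv
    obtain ⟨p, hp, he⟩ := Finset.mem_image.1 hv
    rw [← he, hgf]
    exact ⟨rfl, hp⟩
  have hre : ∑ M ∈ (insert w.length B).sym s,
      (Polynomial.X : Polynomial ℕ) ^ ((M : Multiset ℕ).map
        (fun p => (B.filter fun b => p ≤ b).card)).sum
      = ∑ K ∈ (Finset.range (B.card + 1)).sym s,
          (Polynomial.X : Polynomial ℕ) ^ (K : Multiset ℕ).sum := by
    apply Finset.sum_nbij' (i := fun M => Sym.map f' M)
      (j := fun K => Sym.map (Function.invFun f') K)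
    · intro M hM
      rw [Finset.mem_sym_iff]
      intro a ha
      obtain ⟨b, hb, he⟩ := Sym.mem_map.1 ha
      have hbG : b ∈ insert w.length B := Finset.mem_sym_iff.1 hM b hb
      rw [← himg]
      exact Finset.mem_image.2 ⟨b, hbG, he⟩
    · intro K hK
      rw [Finset.mem_sym_iff]
      intro a ha
      obtain ⟨v, hv, he⟩ := Sym.mem_map.1 ha
      have hvR := Finset.mem_sym_iff.1 hK v hv
      rw [← he]
      exact (hfg v hvR).2
    · intro M hM
      rw [Sym.map_map]
      have : Sym.map (Function.invFun f' ∘ f') M = Sym.map (fun x => x) M :=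
        Sym.map_congr (fun x _ => hgf x)
      rw [this, Sym.map_id']
    · intro K hK
      rw [Sym.map_map]
      have : Sym.map (f' ∘ Function.invFun f') K = Sym.map (fun x => x) K :=
        Sym.map_congr (fun v hv => (hfg v (Finset.mem_sym_iff.1 hK v hv)).1)
      rw [this, Sym.map_id']
    · intro M hM
      congr 1
      rw [Sym.coe_map]
      congr 1
      apply Multiset.map_congr rfl
      intro p hp
      have hpG : p ∈ insert w.length B := Finset.mem_sym_iff.1 hM p hp
      simp only [hf', if_pos hpG]
  rw [hre, sym_range_sum, hnkl, mul_comm]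
end

section
/- Let w be a segmented Smirnov word and m ≥ max w. If w̄ is obtained from w by inserting one occurrence of m as a double fall (at the start of a block), a double rise (at the end of a block), or a new singleton block, then every sminversion of w corresponds to a sminversion of w̄ (under the index shift induced by the insertion). If instead m is inserted as a peak (replacing a block separator), the same holds provided m > max w. -/
private lemma ins_getD_lt {w : List ℕ} {m p k : ℕ} (hk : k < p) (hp : p ≤ w.length) :
    (w.insertIdx p m).getD k 0 = w.getD k 0 := by
  have hk' : k < w.length := lt_of_lt_of_le hk hp
  have hlen : (w.insertIdx p m).length = w.length + 1 := List.length_insertIdx_of_le_length hp m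
  rw [List.getD_eq_getElem _ _ (by omega), List.getD_eq_getElem _ _ hk']
  exact List.getElem_insertIdx_of_lt hk _

private lemma ins_getD_self {w : List ℕ} {m p : ℕ} (hp : p ≤ w.length) :
    (w.insertIdx p m).getD p 0 = m := by
  have hlen : (w.insertIdx p m).length = w.length + 1 := List.length_insertIdx_of_le_length hp m
  rw [List.getD_eq_getElem _ _ (by omega)]
  exact List.getElem_insertIdx_self _

private lemma ins_getD_ge {w : List ℕ} {m p k : ℕ} (hk : p ≤ k) (hk2 : k < w.length) :
    (w.insertIdx p m).getD (k + 1) 0 = w.getD k 0 := by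
  obtain ⟨t, rfl⟩ := Nat.exists_eq_add_of_le hk
  have hp : p ≤ w.length := by omega
  have hlen : (w.insertIdx p m).length = w.length + 1 := List.length_insertIdx_of_le_length hp m
  rw [List.getD_eq_getElem _ _ (by omega), List.getD_eq_getElem _ _ hk2]
  rw [List.getElem_insertIdx_of_gt (by omega)]; simp

private lemma getD_mem {w : List ℕ} {k : ℕ} (hk : k < w.length) : w.getD k 0 ∈ w := by
  rw [List.getD_eq_getElem _ _ hk]; exact List.getElem_mem _

/-- Inserting one occurrence of a maximal letter `m` into a segmented Smirnov
word `(w, B)` at position `p` — as a double fall (new first letter of the block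
starting at `p`), a double rise (new last letter of the block ending at `p`),
a new singleton block at gap `p`, or (if `m` is strictly maximal) a peak
replacing the block separator `p` — sends every sminversion of `w` to a
sminversion of the new word, under the index shift induced by the insertion. -/
theorem stmt8 (w : List ℕ) (B : Finset ℕ) (m p : ℕ) (B' : Finset ℕ)
    (h : IsSSW w B) (hm : ∀ x ∈ w, x ≤ m)
    (hcase :
      -- double fall: `p` starts a block, `m` becomes its new first letter
      (p ∈ B ∧ B' = B.image (fun x => if p < x then x + 1 else x)) ∨
      -- double rise: a block ends just before `p`, `m` becomes its last letter
      ((p ∈ B ∨ p = w.length) ∧ p ≠ 0 ∧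
        B' = B.image (fun x => if p ≤ x then x + 1 else x)) ∨
      -- singleton: a new block `[m]` is inserted in the gap at `p`
      ((p ∈ B ∨ p = w.length) ∧
        B' = insert p (B.image (fun x => if p ≤ x then x + 1 else x))) ∨
      -- peak: the block separator at `p` is replaced by `m` (needs `m` strict)
      ((∀ x ∈ w, x < m) ∧ p ∈ B ∧ p ≠ 0 ∧
        B' = (B.erase p).image (fun x => if p ≤ x then x + 1 else x)))
    (hres : IsSSW (w.insertIdx p m) B') :
    ∀ i j, Sminversion w B i j →
      Sminversion (w.insertIdx p m) B'
        (if i < p then i else i + 1) (if j < p then j else j + 1) := by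
  intro i j hs
  obtain ⟨hij, hjlen, hval, hD⟩ := hs
  have hplen : p ≤ w.length := by
    rcases hcase with ⟨hp, -⟩ | ⟨hp, -, -⟩ | ⟨hp, -⟩ | ⟨-, hp, -, -⟩
    · exact (h.1 p hp).le
    · rcases hp with hp | hp
      · exact (h.1 p hp).le
      · omega
    · rcases hp with hp | hp
      · exact (h.1 p hp).le
      · omega
    · exact (h.1 p hp).le
  have hlen' : (w.insertIdx p m).length = w.length + 1 :=
    List.length_insertIdx_of_le_length hplen m
  have hilen : i < w.length := lt_trans hij hjlen
  have hI : (w.insertIdx p m).getD (if i < p then i else i + 1) 0 = w.getD i 0 := by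
    split
    · exact ins_getD_lt ‹_› hplen
    · exact ins_getD_ge (by omega) hilen
  have hmem_lt : ∀ k, k < p → k ∈ B → k ∈ B' := by
    intro k hk hkB
    rcases hcase with ⟨hp, rfl⟩ | ⟨hp, hp0, rfl⟩ | ⟨hp, rfl⟩ | ⟨hsm, hp, hp0, rfl⟩
    · exact Finset.mem_image.2 ⟨k, hkB, by simp [show ¬ p < k by omega]⟩
    · exact Finset.mem_image.2 ⟨k, hkB, by simp [show ¬ p ≤ k by omega]⟩
    · exact Finset.mem_insert_of_mem
        (Finset.mem_image.2 ⟨k, hkB, by simp [show ¬ p ≤ k by omega]⟩)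
    · exact Finset.mem_image.2 ⟨k, Finset.mem_erase.2 ⟨by omega, hkB⟩,
        by simp [show ¬ p ≤ k by omega]⟩
  have hmem_ge : ∀ k, p < k → k ∈ B → k + 1 ∈ B' := by
    intro k hk hkB
    rcases hcase with ⟨hp, rfl⟩ | ⟨hp, hp0, rfl⟩ | ⟨hp, rfl⟩ | ⟨hsm, hp, hp0, rfl⟩
    · exact Finset.mem_image.2 ⟨k, hkB, by simp [hk]⟩
    · exact Finset.mem_image.2 ⟨k, hkB, by simp [hk.le]⟩
    · exact Finset.mem_insert_of_mem (Finset.mem_image.2 ⟨k, hkB, by simp [hk.le]⟩)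
    · exact Finset.mem_image.2 ⟨k, Finset.mem_erase.2 ⟨by omega, hkB⟩, by simp [hk.le]⟩
  rcases lt_trichotomy j p with hjp | hjp | hjp
  · -- j < p
    have hip : i < p := lt_trans hij hjp
    rw [if_pos hip, if_pos hjp]
    refine ⟨hij, by omega, ?_, ?_⟩
    · rw [ins_getD_lt hjp hplen, ins_getD_lt hip hplen]; exact hval
    · rw [ins_getD_lt (show j - 1 < p by omega) hplen,
        ins_getD_lt (show j - 2 < p by omega) hplen,
        ins_getD_lt hip hplen]
      rcases hD with h1 | h2 | ⟨h3a, h3b, h3c⟩ | h4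
      · exact Or.inl (hmem_lt j hjp h1)
      · exact Or.inr (Or.inl h2)
      · exact Or.inr (Or.inr (Or.inl ⟨h3a, h3b, hmem_lt _ (by omega) h3c⟩))
      · exact Or.inr (Or.inr (Or.inr h4))
  · -- j = p
    subst hjp
    rw [if_pos hij, if_neg (lt_irrefl j)]
    have hvp : (w.insertIdx j m).getD j 0 = m := ins_getD_self hplen
    have hvp1 : (w.insertIdx j m).getD (j + 1) 0 = w.getD j 0 :=
      ins_getD_ge le_rfl hjlen
    have hsub1 : j + 1 - 1 = j := by omega
    refine ⟨by omega, by omega, ?_, ?_⟩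
    · rw [hvp1, ins_getD_lt hij hplen]; exact hval
    · rw [hsub1, hvp, ins_getD_lt hij hplen]
      have ham : w.getD i 0 ≤ m := hm _ (getD_mem hilen)
      rcases hcase with ⟨hpB, rfl⟩ | ⟨hpB, hp0, rfl⟩ | ⟨hpB, rfl⟩ | ⟨hsm, hpB, hp0, rfl⟩
      · rcases lt_or_eq_of_le ham with hlt | heq
        · exact Or.inr (Or.inl hlt)
        · exact Or.inr (Or.inr (Or.inl ⟨by omega, heq.symm,
            Finset.mem_image.2 ⟨j, hpB, by simp⟩⟩))
      · have hpB' : j ∈ B := by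
          rcases hpB with hh | hh
          · exact hh
          · omega
        exact Or.inl (Finset.mem_image.2 ⟨j, hpB', by simp⟩)
      · have hpB' : j ∈ B := by
          rcases hpB with hh | hh
          · exact hh
          · omega
        exact Or.inl (Finset.mem_insert_of_mem (Finset.mem_image.2 ⟨j, hpB', by simp⟩))
      · exact Or.inr (Or.inl (hsm _ (getD_mem hilen)))
  · -- p < j
    rw [if_neg (show ¬ j < p by omega)]
    have hvj : (w.insertIdx p m).getD (j + 1) 0 = w.getD j 0 :=
      ins_getD_ge (by omega) hjlen
    have hvjm : (w.insertIdx p m).getD j 0 = w.getD (j - 1) 0 := by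
      have h0 := ins_getD_ge (w := w) (m := m) (p := p) (k := j - 1) (by omega) (by omega)
      rwa [show j - 1 + 1 = j by omega] at h0
    have hIne : (if i < p then i else i + 1) + 1 = j + 1 → i + 1 = j := by
      split <;> omega
    have hs1 : j + 1 - 1 = j := by omega
    have hs2 : j + 1 - 2 = j - 1 := by omega
    refine ⟨by split <;> omega, by omega, ?_, ?_⟩
    · rw [hvj, hI]; exact hval
    · rw [hs1, hs2, hvjm, hI]
      rcases hD with h1 | h2 | ⟨h3a, h3b, h3c⟩ | ⟨h4a, h4b, h4c, h4d⟩
      · exact Or.inl (hmem_ge j hjp h1)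
      · exact Or.inr (Or.inl h2)
      · rcases lt_or_eq_of_le (show p ≤ j - 1 by omega) with hq | hq
        · have hjB := hmem_ge (j - 1) hq h3c
          rw [show j - 1 + 1 = j by omega] at hjB
          exact Or.inr (Or.inr (Or.inl ⟨fun e => h3a (hIne e), h3b, hjB⟩))
        · -- p = j - 1
          have hvq : (w.insertIdx p m).getD (j - 1) 0 = m := by
            rw [← hq]; exact ins_getD_self hplen
          rcases hcase with ⟨hpB, rfl⟩ | ⟨hpB, hp0, rfl⟩ | ⟨hpB, rfl⟩ | ⟨hsm, hpB, hp0, rfl⟩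
          · -- fall: show w_{j-1} < m via hres, use 4th disjunct
            have hwpm : w.getD (j - 1) 0 < m := by
              rcases lt_or_eq_of_le (hm _ (getD_mem (show j - 1 < w.length by omega)))
                with h' | h'
              · exact h'
              · exfalso
                have hnB : p + 1 ∉ Finset.image (fun x => if p < x then x + 1 else x) B := by
                  intro hcon
                  obtain ⟨x, hx, he⟩ := Finset.mem_image.1 hcon
                  split at he <;> omega
                have hne := hres.2.2.2 p (by omega) hnB
                apply hne
                rw [ins_getD_self hplen,
                  ins_getD_ge (le_refl p) (show p < w.length by omega), hq]
                exact h'.symm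
            rw [hvq]
            exact Or.inr (Or.inr (Or.inr ⟨fun e => h3a (hIne e), by omega, hwpm, h3b⟩))
          · -- rise: j = p + 1 ∈ B'
            have : j ∈ Finset.image (fun x => if p ≤ x then x + 1 else x) B :=
              Finset.mem_image.2 ⟨p, hq ▸ h3c, by rw [if_pos (le_refl p)]; omega⟩
            exact Or.inr (Or.inr (Or.inl ⟨fun e => h3a (hIne e), h3b, this⟩))
          · have : j ∈ insert p (Finset.image (fun x => if p ≤ x then x + 1 else x) B) :=
              Finset.mem_insert_of_mem (Finset.mem_image.2 ⟨p, hq ▸ h3c, by rw [if_pos (le_refl p)]; omega⟩)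
            exact Or.inr (Or.inr (Or.inl ⟨fun e => h3a (hIne e), h3b, this⟩))
          · -- peak: strict max
            rw [hvq]
            exact Or.inr (Or.inr (Or.inr ⟨fun e => h3a (hIne e), by omega,
              hsm _ (getD_mem (show j - 1 < w.length by omega)), h3b⟩))
      · rcases lt_or_eq_of_le (show p ≤ j - 1 by omega) with hq | hq
        · have hv2 : (w.insertIdx p m).getD (j - 1) 0 = w.getD (j - 2) 0 := by
            have h0 := ins_getD_ge (w := w) (m := m) (p := p) (k := j - 2)
              (by omega) (by omega)
            rwa [show j - 2 + 1 = j - 1 by omega] at h0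
          rw [hv2]
          exact Or.inr (Or.inr (Or.inr ⟨fun e => h4a (hIne e), by omega, h4c, h4d⟩))
        · have hvq : (w.insertIdx p m).getD (j - 1) 0 = m := by
            rw [← hq]; exact ins_getD_self hplen
          rw [hvq]
          have hwm : w.getD (j - 1) 0 < m :=
            lt_of_lt_of_le h4c (hm _ (getD_mem (by omega)))
          exact Or.inr (Or.inr (Or.inr ⟨fun e => h4a (hIne e), by omega, hwm, h4d⟩))
end
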